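/- (Lower bound on packet decoding error) Let E[1],…,E[n] be i.i.d. Bernoulli(β) with n = k/(1-2x) for x ∈ (β, 1/2). Then P(∑_{i=1}^n E[i] > n x) ≥ (β/(1-β)) · exp(-(k/(1-2x)) H(B(x))) · exp(-(k/(1-2x)) D(B(x)‖B(β))), where B(p) denotes the Bernoulli(p) distribution, H is its entropy, and D is the Kullback–Leibler divergence. -/

import Mathlib

open MeasureTheory ENNReal Finset

/-- Entropy of the Bernoulli distribution `B(x)` (natural logarithm). -/
noncomputable def binEnt (x : ℝ) : ℝ := -x * Real.log x - (1 - x) * Real.log (1 - x)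

/-- Kullback–Leibler divergence `D(B(x) ‖ B(β))` between Bernoulli distributions. -/
noncomputable def binKL (x β : ℝ) : ℝ :=
  x * Real.log (x / β) + (1 - x) * Real.log ((1 - x) / (1 - β))

lemma packet_card_filter (n m : ℕ) (hmn : m ≤ n) :
    (Finset.univ.filter fun i : Fin n => (i:ℕ) < m).card = m := by
  have hset : (Finset.univ.filter fun i : Fin n => (i:ℕ) < m)
      = (Finset.range m).attachFin (fun a ha => lt_of_lt_of_le (Finset.mem_range.mp ha) hmn) := by
    ext i; simp [Finset.mem_attachFin]
  rw [hset, Finset.card_attachFin, Finset.card_range]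

lemma packet_key_ineq (β x : ℝ) (n m : ℕ) (hβ0 : 0 < β) (hβx : β < x) (hx : x < 1 / 2)
    (hm : (m : ℝ) ≤ (n : ℝ) * x + 1) (hmn : m ≤ n) :
    β / (1 - β) * Real.exp (-(n : ℝ) * binEnt x) * Real.exp (-(n : ℝ) * binKL x β)
      ≤ β ^ m * (1 - β) ^ (n - m) := by
  have hx0 : 0 < x := lt_trans hβ0 hβx
  have h1β : 0 < 1 - β := by linarith
  have h1x : 0 < 1 - x := by linarith
  have hr0 : 0 < β / (1 - β) := div_pos hβ0 h1β
  have hr1 : β / (1 - β) ≤ 1 := by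
    rw [div_le_one h1β]; linarith
  have hsum : -(n : ℝ) * binEnt x + -(n : ℝ) * binKL x β
      = ((n : ℝ) * x) * Real.log β + ((n : ℝ) * (1 - x)) * Real.log (1 - β) := by
    unfold binEnt binKL
    rw [Real.log_div hx0.ne' hβ0.ne', Real.log_div h1x.ne' h1β.ne']
    ring
  have hLHS : β / (1 - β) * Real.exp (-(n : ℝ) * binEnt x) * Real.exp (-(n : ℝ) * binKL x β)
      = β / (1 - β) * (β ^ ((n : ℝ) * x) * (1 - β) ^ ((n : ℝ) * (1 - x))) := by
    rw [mul_assoc, ← Real.exp_add, hsum, Real.exp_add,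
      Real.rpow_def_of_pos hβ0, Real.rpow_def_of_pos h1β, mul_comm (Real.log β),
      mul_comm (Real.log (1 - β))]
  rw [hLHS]
  have hRHS : β ^ m * (1 - β) ^ (n - m)
      = (1 - β) ^ (n : ℝ) * (β / (1 - β)) ^ (m : ℝ) := by
    rw [Real.rpow_natCast, Real.rpow_natCast, div_pow, pow_sub₀ _ h1β.ne' hmn]
    field_simp
  rw [hRHS]
  have step1 : (β / (1 - β)) ^ ((n : ℝ) * x + 1) ≤ (β / (1 - β)) ^ (m : ℝ) :=
    Real.rpow_le_rpow_of_exponent_ge hr0 hr1 hm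
  have step2 : β / (1 - β) * (β ^ ((n : ℝ) * x) * (1 - β) ^ ((n : ℝ) * (1 - x)))
      = (1 - β) ^ (n : ℝ) * (β / (1 - β)) ^ ((n : ℝ) * x + 1) := by
    rw [Real.rpow_add hr0, Real.rpow_one, Real.div_rpow hβ0.le h1β.le]
    have h2 : ((n : ℝ) * (1 - x)) = (n : ℝ) - (n : ℝ) * x := by ring
    rw [h2, Real.rpow_sub h1β]
    have hb : (0:ℝ) < (1 - β) ^ ((n : ℝ) * x) := Real.rpow_pos_of_pos h1β _
    field_simp
  rw [step2]
  exact mul_le_mul_of_nonneg_left step1 (Real.rpow_nonneg h1β.le _)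

lemma packet_singleton_measure (β : ℝ) (n m : ℕ) (hβ0 : 0 < β) (hmn : m ≤ n)
    (hle : Real.toNNReal β ≤ 1) :
    (Measure.pi fun _ : Fin n => ((PMF.bernoulli (Real.toNNReal β) hle).toMeasure))
      {fun i : Fin n => decide ((i:ℕ) < m)}
      = ENNReal.ofReal (β ^ m * (1 - β) ^ (n - m)) := by
  have hβ1 : β ≤ 1 := Real.toNNReal_le_one.mp hle
  set ω₀ : Fin n → Bool := fun i => decide ((i:ℕ) < m) with hω₀
  rw [← Set.univ_pi_singleton ω₀, Measure.pi_pi]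
  have hsingle : ∀ i : Fin n,
      ((PMF.bernoulli (Real.toNNReal β) hle).toMeasure) {ω₀ i}
        = ENNReal.ofReal (if (i:ℕ) < m then β else 1 - β) := by
    intro i
    rw [PMF.toMeasure_apply_singleton _ _ (measurableSet_singleton _),
      PMF.bernoulli_apply]
    by_cases h : (i:ℕ) < m
    · simp [hω₀, h]
      rfl
    · simp only [hω₀, h, decide_eq_true_eq, if_neg h, decide_false, Bool.cond_false]
      change (1:ℝ≥0∞) - ENNReal.ofReal β = _
      rw [← ENNReal.ofReal_one, ← ENNReal.ofReal_sub _ hβ0.le]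
      simp
  simp_rw [hsingle]
  rw [← ENNReal.ofReal_prod_of_nonneg
    (fun i _ => by by_cases h : (i:ℕ) < m <;> simp [h] <;> linarith [hβ1])]
  congr 1
  rw [Finset.prod_ite (fun _ => β) (fun _ => (1 - β)), Finset.prod_const, Finset.prod_const]
  have hcard := packet_card_filter n m hmn
  have hcard2 : (Finset.univ.filter fun i : Fin n => ¬ (i:ℕ) < m).card = n - m := by
    have := Finset.card_filter_add_card_filter_not (s := (Finset.univ : Finset (Fin n)))
      (p := fun i : Fin n => (i:ℕ) < m)
    rw [Finset.card_univ, Fintype.card_fin, hcard] at this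
    omega
  rw [hcard, hcard2]

/-- Lower bound on the packet decoding error: for `E[1], …, E[n]` i.i.d. Bernoulli(β) with
`n = k/(1-2x)` and `β < x < 1/2`,
`P(∑ E[i] > n x) ≥ (β/(1-β)) exp(-(k/(1-2x)) H(B(x))) exp(-(k/(1-2x)) D(B(x)‖B(β)))`. -/
theorem packet_error_lower_bound (k β x : ℝ) (n : ℕ)
    (hβ0 : 0 < β) (hβx : β < x) (hx : x < 1 / 2) (hk : 0 < k)
    (hn : (n : ℝ) = k / (1 - 2 * x)) :
    (Measure.pi fun _ : Fin n =>
        ((PMF.bernoulli (Real.toNNReal β)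
            (by simpa using Real.toNNReal_le_one.mpr (by linarith : β ≤ 1))).toMeasure))
      {ω : Fin n → Bool | (∑ i, if ω i then (1:ℝ) else 0) > (n : ℝ) * x}
      ≥ ENNReal.ofReal
          (β / (1 - β) * Real.exp (-(k / (1 - 2 * x)) * binEnt x)
            * Real.exp (-(k / (1 - 2 * x)) * binKL x β)) := by
  have h2x : 0 < 1 - 2 * x := by linarith
  have hnpos : 0 < (n : ℝ) := by rw [hn]; exact div_pos hk h2x
  have hxn : (n : ℝ) * x < n := by
    nlinarith
  set m : ℕ := ⌊(n : ℝ) * x⌋₊ + 1 with hm_def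
  have hnx0 : (0:ℝ) ≤ (n : ℝ) * x := by
    have : 0 < x := lt_trans hβ0 hβx
    positivity
  have hmn : m ≤ n := by
    have : ⌊(n : ℝ) * x⌋₊ < n := (Nat.floor_lt hnx0).mpr hxn
    omega
  have hm : (m : ℝ) ≤ (n : ℝ) * x + 1 := by
    have := Nat.floor_le hnx0
    push_cast [hm_def]
    linarith
  have hmgt : (n : ℝ) * x < (m : ℝ) := by
    have := Nat.lt_floor_add_one ((n : ℝ) * x)
    push_cast [hm_def]
    linarith
  rw [hn.symm]
  set hle : Real.toNNReal β ≤ 1 :=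
    (by simpa using Real.toNNReal_le_one.mpr (by linarith : β ≤ 1)) with hle_def
  have hsub : ({fun i : Fin n => decide ((i:ℕ) < m)} : Set (Fin n → Bool))
      ⊆ {ω : Fin n → Bool | (∑ i, if ω i then (1:ℝ) else 0) > (n : ℝ) * x} := by
    intro ω hω
    rw [Set.mem_singleton_iff] at hω
    subst hω
    simpa [Finset.sum_boole, packet_card_filter n m hmn] using hmgt
  calc ENNReal.ofReal
          (β / (1 - β) * Real.exp (-(n:ℝ) * binEnt x) * Real.exp (-(n:ℝ) * binKL x β))
      ≤ ENNReal.ofReal (β ^ m * (1 - β) ^ (n - m)) :=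
        ENNReal.ofReal_le_ofReal (packet_key_ineq β x n m hβ0 hβx hx hm hmn)
    _ = (Measure.pi fun _ : Fin n => ((PMF.bernoulli (Real.toNNReal β) hle).toMeasure))
          {fun i : Fin n => decide ((i:ℕ) < m)} :=
        (packet_singleton_measure β n m hβ0 hmn hle).symm
    _ ≤ _ := measure_mono hsub
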